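/- Let Ẽ = (L̃, σ̃, τ) be the Lie algebra of the general construction with L̃ = 𝔤 ⊗_k R̃, where 𝔤 is a Lie algebra over k with trivial centre, R ⊆ R̃ are commutative associative unital k-algebras, D acts on R̃ by k-derivations leaving R invariant (and hence acts on L̃ by d·(x⊗s) = x⊗d(s), leaving L = 𝔤 ⊗_k R invariant), and σ̃ : L̃ × L̃ → V restricts to a map σ : L × L → V. Then E = L ⊕ V ⊕ D is a Lie subalgebra of Ẽ, namely E = (L,σ,τ), and: for every Lie algebra automorphism f̃ of Ẽ with f̃(L ⊕ V) = L ⊕ V, one has f̃(E) = E. -/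

import Mathlib

open TensorProduct

/-! Statement 15 (Lemma 5.2 of the paper): `E = L ⊕ V ⊕ D` with `L = 𝔤 ⊗ R` is a subalgebra
of `Ẽ = (𝔤 ⊗ R̃) ⊕ V ⊕ D`, and any automorphism of `Ẽ` preserving `L ⊕ V` preserves `E`.
The tensor products are written with the scalars on the left. -/

/-- The bracket of the general construction on `E = L × V × D` (paper §1.4):
`[l₁+v₁+d₁, l₂+v₂+d₂] = ([l₁,l₂] + d₁·l₂ − d₂·l₁) + (σ(l₁,l₂) + d₁·v₂ − d₂·v₁ + τ(d₁,d₂)) + [d₁,d₂]`. -/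
def gcBracket {L V D : Type*} [LieRing L] [AddCommGroup V] [LieRing D]
    (act : D → L → L) (actV : D → V → V) (σ : L → L → V) (τ : D → D → V) :
    (L × V × D) → (L × V × D) → (L × V × D) :=
  fun e₁ e₂ =>
    (⁅e₁.1, e₂.1⁆ + act e₁.2.2 e₂.1 - act e₂.2.2 e₁.1,
     σ e₁.1 e₂.1 + actV e₁.2.2 e₂.2.1 - actV e₂.2.2 e₁.2.1 + τ e₁.2.2 e₂.2.2,
     ⁅e₁.2.2, e₂.2.2⁆)

set_option maxHeartbeats 1000000

theorem gc_subalgebra_and_automorphism_restriction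
    {k : Type*} [Field k] [CharZero k]
    {g : Type*} [LieRing g] [LieAlgebra k g]
    -- `𝔤` has trivial centre
    (hZ : ∀ z : g, (∀ x : g, ⁅z, x⁆ = 0) → z = 0)
    -- commutative associative unital `k`-algebras `R ⊆ R̃`
    {Rt : Type*} [CommRing Rt] [Algebra k Rt] (Rsub : Subalgebra k Rt)
    {D : Type*} [LieRing D] [LieAlgebra k D]
    -- `D` acts on `R̃` by `k`-derivations leaving `R` invariant
    (actR : D →ₗ[k] Rt →ₗ[k] Rt)
    (hactRLie : ∀ d₁ d₂ : D, ∀ r : Rt,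
      actR ⁅d₁, d₂⁆ r = actR d₁ (actR d₂ r) - actR d₂ (actR d₁ r))
    (hactRDer : ∀ (d : D) (r s : Rt), actR d (r * s) = actR d r * s + r * actR d s)
    (hactRInv : ∀ (d : D) (r : Rt), r ∈ Rsub → actR d r ∈ Rsub)
    -- a `D`-module `V`
    {V : Type*} [AddCommGroup V] [Module k V]
    (actV : D →ₗ[k] V →ₗ[k] V)
    (hactVLie : ∀ d₁ d₂ : D, ∀ v : V, actV ⁅d₁, d₂⁆ v = actV d₁ (actV d₂ v) - actV d₂ (actV d₁ v))
    -- an alternating central 2-cocycle `σ̃ : L̃ × L̃ → V` on `L̃ = 𝔤 ⊗ R̃`, `D`-equivariant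
    (σt : (Rt ⊗[k] g) →ₗ[k] (Rt ⊗[k] g) →ₗ[k] V)
    (hσalt : ∀ l : Rt ⊗[k] g, σt l l = 0)
    (hσcoc : ∀ l₁ l₂ l₃ : Rt ⊗[k] g, σt ⁅l₁, l₂⁆ l₃ + σt ⁅l₂, l₃⁆ l₁ + σt ⁅l₃, l₁⁆ l₂ = 0)
    (hσequiv : ∀ (d : D) (l₁ l₂ : Rt ⊗[k] g),
      actV d (σt l₁ l₂)
        = σt (LinearMap.rTensor g (actR d) l₁) l₂ + σt l₁ (LinearMap.rTensor g (actR d) l₂))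
    -- an alternating 2-cocycle `τ : D × D → V`
    (τ : D →ₗ[k] D →ₗ[k] V)
    (hτalt : ∀ d : D, τ d d = 0)
    (hτcoc : ∀ d₁ d₂ d₃ : D,
      actV d₁ (τ d₂ d₃) + actV d₂ (τ d₃ d₁) + actV d₃ (τ d₁ d₂)
        = τ ⁅d₁, d₂⁆ d₃ + τ ⁅d₂, d₃⁆ d₁ + τ ⁅d₃, d₁⁆ d₂) :
    -- `Ẽ = L̃ ⊕ V ⊕ D` with the bracket of the general construction,
    -- `D` acting on `L̃` via `d·(s ⊗ x) = d(s) ⊗ x`: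
    let br := gcBracket (L := Rt ⊗[k] g) (V := V) (D := D)
        (fun d l => LinearMap.rTensor g (actR d) l) (fun d v => actV d v)
        (fun l₁ l₂ => σt l₁ l₂) (fun d₁ d₂ => τ d₁ d₂)
    -- `L = 𝔤 ⊗ R ⊆ L̃`:
    let Lsub : Submodule k (Rt ⊗[k] g) :=
      LinearMap.range (TensorProduct.map (Subalgebra.toSubmodule Rsub).subtype
        (LinearMap.id (R := k) (M := g)))
    -- (a) `E = L ⊕ V ⊕ D` is a Lie subalgebra of `Ẽ` (it is closed under the bracket);
    (∀ e₁ e₂ : (Rt ⊗[k] g) × V × D,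
        e₁.1 ∈ Lsub → e₂.1 ∈ Lsub → (br e₁ e₂).1 ∈ Lsub) ∧
    -- (b) every Lie algebra automorphism `f̃` of `Ẽ` with `f̃(L ⊕ V) = L ⊕ V`
    --     satisfies `f̃(E) = E`.
    (∀ ft : ((Rt ⊗[k] g) × V × D) ≃ₗ[k] ((Rt ⊗[k] g) × V × D),
      (∀ e₁ e₂, ft (br e₁ e₂) = br (ft e₁) (ft e₂)) →
      (ft '' {e | e.1 ∈ Lsub ∧ e.2.2 = 0} = {e | e.1 ∈ Lsub ∧ e.2.2 = 0}) →
      ∀ e : (Rt ⊗[k] g) × V × D, e.1 ∈ Lsub ↔ (ft e).1 ∈ Lsub) := by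
  intro br Lsub
  have hbrdef : ∀ e₁ e₂ : (Rt ⊗[k] g) × V × D, br e₁ e₂ =
      (⁅e₁.1, e₂.1⁆ + LinearMap.rTensor g (actR e₁.2.2) e₂.1
          - LinearMap.rTensor g (actR e₂.2.2) e₁.1,
       σt e₁.1 e₂.1 + actV e₁.2.2 e₂.2.1 - actV e₂.2.2 e₁.2.1 + τ e₁.2.2 e₂.2.2,
       ⁅e₁.2.2, e₂.2.2⁆) := fun _ _ => rfl
  -- generators of `Lsub`
  have hgen : ∀ r : Rt, r ∈ Rsub → ∀ x : g, r ⊗ₜ[k] x ∈ Lsub := by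
    intro r hr x
    exact ⟨(⟨r, hr⟩ : Rsub) ⊗ₜ[k] x, by simp⟩
  -- induction principle for membership in `Lsub`
  have hind : ∀ p : Rt ⊗[k] g → Prop, p 0 → (∀ r ∈ Rsub, ∀ x : g, p (r ⊗ₜ[k] x)) →
      (∀ a b, p a → p b → p (a + b)) → ∀ l ∈ Lsub, p l := by
    rintro p h0 hg hadd l ⟨t, rfl⟩
    induction t using TensorProduct.induction_on with
    | zero => simpa using h0
    | tmul r x => simpa using hg r.1 r.2 x
    | add a b ha hb => rw [map_add]; exact hadd _ _ ha hb
  -- stability of `Lsub` under `rTensor` of `Rsub`-preserving maps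
  have hstab : ∀ φ : Rt →ₗ[k] Rt, (∀ r ∈ Rsub, φ r ∈ Rsub) →
      ∀ l ∈ Lsub, LinearMap.rTensor g φ l ∈ Lsub := by
    intro φ hφ
    refine hind _ ?_ ?_ ?_
    · rw [map_zero]; exact Lsub.zero_mem
    · intro r hr x; rw [LinearMap.rTensor_tmul]; exact hgen _ (hφ r hr) x
    · intro a b ha hb; rw [map_add]; exact Lsub.add_mem ha hb
  -- stability of `Lsub` under the bracket
  have hbr : ∀ l₁ ∈ Lsub, ∀ l₂ ∈ Lsub, ⁅l₁, l₂⁆ ∈ Lsub := by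
    refine hind (fun l₁ => ∀ l₂ ∈ Lsub, ⁅l₁, l₂⁆ ∈ Lsub) ?_ ?_ ?_
    · intro l₂ _; rw [zero_lie]; exact Lsub.zero_mem
    · intro r hr x
      refine hind _ ?_ ?_ ?_
      · rw [lie_zero]; exact Lsub.zero_mem
      · intro s hs y
        rw [LieAlgebra.ExtendScalars.bracket_tmul]
        exact hgen _ (mul_mem hr hs) _
      · intro a b ha hb; rw [lie_add]; exact Lsub.add_mem ha hb
    · intro a b ha hb l₂ hl₂; rw [add_lie]; exact Lsub.add_mem (ha l₂ hl₂) (hb l₂ hl₂)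
  refine ⟨?_, ?_⟩
  · -- part (a)
    intro e₁ e₂ h1 h2
    rw [hbrdef]
    exact Lsub.sub_mem
      (Lsub.add_mem (hbr _ h1 _ h2) (hstab _ (hactRInv e₁.2.2) _ h2))
      (hstab _ (hactRInv e₂.2.2) _ h1)
  -- part (b): first set up the projection machinery
  obtain ⟨q, hq⟩ := Submodule.exists_isCompl (Subalgebra.toSubmodule Rsub)
  set pr : Rt →ₗ[k] Rt :=
    (Subalgebra.toSubmodule Rsub).subtype ∘ₗ
      (Submodule.linearProjOfIsCompl _ q hq) with hprdef
  have hpr_mem : ∀ r : Rt, pr r ∈ Rsub := fun r =>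
    ((Submodule.linearProjOfIsCompl _ q hq) r).2
  have hpr_id : ∀ r ∈ Rsub, pr r = r := by
    intro r hr
    have := Submodule.linearProjOfIsCompl_apply_left hq
      (⟨r, hr⟩ : Subalgebra.toSubmodule Rsub)
    exact congrArg (Subtype.val) this
  set π : Rt →ₗ[k] Rt := LinearMap.id - pr with hπdef
  have hπ_apply : ∀ r : Rt, π r = r - pr r := fun r => rfl
  have hπ_R : ∀ r ∈ Rsub, π r = 0 := by
    intro r hr; rw [hπ_apply, hpr_id r hr, sub_self]
  have hππ : ∀ r : Rt, π (π r) = π r := by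
    intro r
    rw [hπ_apply (π r), hπ_apply r]
    have : pr (r - pr r) = 0 := by
      rw [map_sub, hpr_id (pr r) (hpr_mem r), sub_self]
    rw [this, sub_zero]
  -- the splitting `l = rTensor pr l + rTensor π l`
  have hsplit : ∀ l : Rt ⊗[k] g,
      LinearMap.rTensor g pr l + LinearMap.rTensor g π l = l := by
    intro l
    induction l using TensorProduct.induction_on with
    | zero => simp
    | tmul s y =>
      rw [LinearMap.rTensor_tmul, LinearMap.rTensor_tmul, ← TensorProduct.add_tmul]
      congr 1
      rw [hπ_apply]; ring
    | add a b ha hb => rw [map_add, map_add, add_add_add_comm, ha, hb]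
  have hprL : ∀ l : Rt ⊗[k] g, LinearMap.rTensor g pr l ∈ Lsub := by
    intro l
    induction l using TensorProduct.induction_on with
    | zero => rw [map_zero]; exact Lsub.zero_mem
    | tmul s y => rw [LinearMap.rTensor_tmul]; exact hgen _ (hpr_mem s) y
    | add a b ha hb => rw [map_add]; exact Lsub.add_mem ha hb
  -- membership in `Lsub` in terms of `π`
  have hker : ∀ l : Rt ⊗[k] g, l ∈ Lsub ↔ LinearMap.rTensor g π l = 0 := by
    intro l
    constructor
    · refine hind (fun l => LinearMap.rTensor g π l = 0) ?_ ?_ ?_ l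
      · exact map_zero _
      · intro r hr x
        show LinearMap.rTensor g π (r ⊗ₜ[k] x) = 0
        rw [LinearMap.rTensor_tmul, hπ_R r hr, TensorProduct.zero_tmul]
      · intro a b ha hb
        show LinearMap.rTensor g π (a + b) = 0
        rw [map_add, ha, hb, add_zero]
    · intro h
      have := hsplit l
      rw [h, add_zero] at this
      rw [← this]; exact hprL l
  -- coordinates with respect to a basis of `Rt`
  let bR := Module.Basis.ofVectorSpace k Rt
  let bG := Module.Basis.ofVectorSpace k g
  let c : Module.Basis.ofVectorSpaceIndex k Rt → (Rt ⊗[k] g →ₗ[k] g) := fun i =>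
    (TensorProduct.lid k g).toLinearMap ∘ₗ LinearMap.rTensor g (bR.coord i)
  have hc_tmul : ∀ i, ∀ (s : Rt) (y : g), c i (s ⊗ₜ[k] y) = bR.repr s i • y := by
    intro i s y
    show ((TensorProduct.lid k g).toLinearMap ∘ₗ LinearMap.rTensor g (bR.coord i)) (s ⊗ₜ[k] y)
      = bR.repr s i • y
    simp [Module.Basis.coord]
  have hcoordrepr : ∀ (t : Rt ⊗[k] g) i j,
      bG.repr (c i t) j = (Module.Basis.tensorProduct bR bG).repr t (i, j) := by
    intro t i j
    induction t using TensorProduct.induction_on with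
    | zero => simp
    | tmul s y =>
      rw [hc_tmul, Module.Basis.tensorProduct_repr_tmul_apply]
      simp [mul_comm]
    | add a b ha hb => rw [map_add, map_add, map_add, Finsupp.add_apply,
        Finsupp.add_apply, ha, hb]
  have hinj : ∀ t : Rt ⊗[k] g, (∀ i, c i t = 0) → t = 0 := by
    intro t ht
    have : (Module.Basis.tensorProduct bR bG).repr t = 0 := by
      ext p
      rw [← hcoordrepr t p.1 p.2, ht p.1, map_zero]
      rfl
    simpa using (Module.Basis.tensorProduct bR bG).repr.map_eq_zero_iff.mp this
  -- bracketing with `1 ⊗ x` commutes with `rTensor π`, and with coordinates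
  have hππbr : ∀ (t : Rt ⊗[k] g) (x : g),
      LinearMap.rTensor g π ⁅t, (1 : Rt) ⊗ₜ[k] x⁆ = ⁅LinearMap.rTensor g π t, (1 : Rt) ⊗ₜ[k] x⁆ := by
    intro t x
    induction t using TensorProduct.induction_on with
    | zero => simp only [map_zero, zero_lie]
    | tmul s y =>
      rw [LinearMap.rTensor_tmul, LieAlgebra.ExtendScalars.bracket_tmul,
        LieAlgebra.ExtendScalars.bracket_tmul, LinearMap.rTensor_tmul, mul_one, mul_one]
    | add a b ha hb => simp only [map_add, add_lie, ha, hb]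
  have hcbr : ∀ (t : Rt ⊗[k] g) (x : g) i, c i ⁅t, (1 : Rt) ⊗ₜ[k] x⁆ = ⁅c i t, x⁆ := by
    intro t x i
    induction t using TensorProduct.induction_on with
    | zero => simp only [map_zero, zero_lie]
    | tmul s y =>
      rw [LieAlgebra.ExtendScalars.bracket_tmul, mul_one, hc_tmul, hc_tmul, smul_lie]
    | add a b ha hb => simp only [map_add, add_lie, ha, hb]
  -- key closedness property: an element whose bracket with `Lsub` lies in `Lsub` is in `Lsub`
  have hLclosed : ∀ l' : Rt ⊗[k] g, (∀ m ∈ Lsub, ⁅l', m⁆ ∈ Lsub) → l' ∈ Lsub := by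
    intro l' hl'
    set t := LinearMap.rTensor g π l' with htdef
    have htπ : LinearMap.rTensor g π t = t := by
      rw [htdef, ← LinearMap.comp_apply, ← LinearMap.rTensor_comp]
      congr 1
      exact congrArg _ (LinearMap.ext hππ)
    have hl't : l' - t ∈ Lsub := by
      have h2 : l' - t = LinearMap.rTensor g pr l' :=
        sub_eq_of_eq_add (hsplit l').symm
      rw [h2]; exact hprL l'
    have htzero : t = 0 := by
      apply hinj
      intro i
      apply hZ
      intro x
      have hmx : (1 : Rt) ⊗ₜ[k] x ∈ Lsub := hgen 1 Rsub.one_mem x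
      have h1 : ⁅t, (1 : Rt) ⊗ₜ[k] x⁆ ∈ Lsub := by
        have : ⁅t, (1 : Rt) ⊗ₜ[k] x⁆ = ⁅l', (1 : Rt) ⊗ₜ[k] x⁆ - ⁅l' - t, (1 : Rt) ⊗ₜ[k] x⁆ := by
          rw [sub_lie, sub_sub_cancel]
        rw [this]
        exact Lsub.sub_mem (hl' _ hmx) (hbr _ hl't _ hmx)
      have h2 : ⁅t, (1 : Rt) ⊗ₜ[k] x⁆ = 0 := by
        have := (hker _).mp h1
        rw [hππbr, htπ] at this
        exact this
      rw [← hcbr t x i, h2, map_zero]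
    have h3 := hl't
    rw [htzero, sub_zero] at h3
    exact h3
  -- one-directional version of part (b)
  have key : ∀ G : ((Rt ⊗[k] g) × V × D) ≃ₗ[k] ((Rt ⊗[k] g) × V × D),
      (∀ e₁ e₂, G (br e₁ e₂) = br (G e₁) (G e₂)) →
      (∀ e : (Rt ⊗[k] g) × V × D, e.1 ∈ Lsub ∧ e.2.2 = 0 → (G e).1 ∈ Lsub ∧ (G e).2.2 = 0) →
      (∀ e : (Rt ⊗[k] g) × V × D, e.1 ∈ Lsub ∧ e.2.2 = 0 → (G.symm e).1 ∈ Lsub ∧ (G.symm e).2.2 = 0) →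
      ∀ e : (Rt ⊗[k] g) × V × D, e.1 ∈ Lsub → (G e).1 ∈ Lsub := by
    intro G hGbr hGS hGsymmS e he
    have keyd : ∀ d : D, (G (0, 0, d)).1 ∈ Lsub := by
      intro d
      apply hLclosed
      intro m hm
      set u := G.symm (m, 0, 0) with hudef
      have hu : u.1 ∈ Lsub ∧ u.2.2 = 0 := hGsymmS _ ⟨hm, rfl⟩
      have hbru1 : (br (0, 0, d) u).1 ∈ Lsub := by
        rw [hbrdef]
        simp only [zero_lie, map_zero, zero_add, sub_zero]
        exact hstab _ (hactRInv d) _ hu.1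
      have hbru3 : (br (0, 0, d) u).2.2 = 0 := by
        rw [hbrdef]
        simp [hu.2]
      have hG1 : (G (br (0, 0, d) u)).1 ∈ Lsub := (hGS _ ⟨hbru1, hbru3⟩).1
      rw [hGbr, hudef, G.apply_symm_apply] at hG1
      rw [hbrdef] at hG1
      simp only [map_zero, LinearMap.rTensor_zero, LinearMap.zero_apply, sub_zero] at hG1
      have hact : LinearMap.rTensor g (actR (G (0, 0, d)).2.2) m ∈ Lsub :=
        hstab _ (hactRInv _) _ hm
      have := Lsub.sub_mem hG1 hact
      simpa using this
    have hesplit : e = (e.1, e.2.1, 0) + (0, 0, e.2.2) := by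
      ext <;> simp
    rw [hesplit, map_add]
    exact Lsub.add_mem (hGS (e.1, e.2.1, 0) ⟨he, rfl⟩).1 (keyd e.2.2)
  -- conclude
  intro ft hftbr hftS e
  have hS1 : ∀ e : (Rt ⊗[k] g) × V × D, e.1 ∈ Lsub ∧ e.2.2 = 0 →
      (ft e).1 ∈ Lsub ∧ (ft e).2.2 = 0 := by
    intro e he
    have : ft e ∈ ft '' {e | e.1 ∈ Lsub ∧ e.2.2 = 0} := ⟨e, he, rfl⟩
    rw [hftS] at this
    exact this
  have hS2 : ∀ e : (Rt ⊗[k] g) × V × D, e.1 ∈ Lsub ∧ e.2.2 = 0 →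
      (ft.symm e).1 ∈ Lsub ∧ (ft.symm e).2.2 = 0 := by
    intro e he
    have : e ∈ ft '' {e | e.1 ∈ Lsub ∧ e.2.2 = 0} := by rw [hftS]; exact he
    obtain ⟨u, hu, rfl⟩ := this
    rw [ft.symm_apply_apply]
    exact hu
  have hsymmbr : ∀ e₁ e₂, ft.symm (br e₁ e₂) = br (ft.symm e₁) (ft.symm e₂) := by
    intro e₁ e₂
    apply ft.injective
    rw [ft.apply_symm_apply, hftbr, ft.apply_symm_apply, ft.apply_symm_apply]
  constructor
  · exact key ft hftbr hS1 hS2 e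
  · intro h
    have hS1' : ∀ e : (Rt ⊗[k] g) × V × D, e.1 ∈ Lsub ∧ e.2.2 = 0 →
        (ft.symm.symm e).1 ∈ Lsub ∧ (ft.symm.symm e).2.2 = 0 := by
      intro e he
      rw [LinearEquiv.symm_symm]
      exact hS1 e he
    have := key ft.symm hsymmbr hS2 hS1' (ft e) h
    rwa [ft.symm_apply_apply] at this
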